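/- For step functions u = Σ_i q_i χ_{E_i} (q_1 > … > q_n) and v = Σ_j r_j χ_{F_j} (r_1 > … > r_m), for all sufficiently small t > 0 the level sets of u + t v are exactly the sets E_i ∩ F_j, and each level of u + t v is contained in exactly one level set of u; consequently the relative rearrangement v_{*u} equals r_j on the interval J_j^i = [a_{i−1} + Σ_{k<j}|E_i ∩ F_k|, a_{i−1} + Σ_{k≤j}|E_i ∩ F_k|), where a_i = Σ_{k≤i}|E_k|. -/

import Mathlib

open MeasureTheory Set

/-- Distribution function `m_u(q) = |{x ∈ Ω : u(x) > q}|`. -/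
noncomputable def distFun {d : ℕ} (Ω : Set (EuclideanSpace ℝ (Fin d)))
    (u : EuclideanSpace ℝ (Fin d) → ℝ) (q : ℝ) : ℝ :=
  (volume {x | x ∈ Ω ∧ q < u x}).toReal

/-- Decreasing rearrangement `u_*(s) = inf {q : m_u(q) ≤ s}`. -/
noncomputable def decRearr {d : ℕ} (Ω : Set (EuclideanSpace ℝ (Fin d)))
    (u : EuclideanSpace ℝ (Fin d) → ℝ) (s : ℝ) : ℝ :=
  sInf {q : ℝ | distFun Ω u q ≤ s}

lemma aux_sum_ind {α : Type*} {N : ℕ} (E : Fin N → Set α) (q : Fin N → ℝ)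
    (hEd : ∀ i j, i ≠ j → Disjoint (E i) (E j)) {x : α} {i : Fin N} (hx : x ∈ E i) :
    ∑ k, Set.indicator (E k) (fun _ => q k) x = q i := by
  rw [Finset.sum_eq_single i]
  · exact Set.indicator_of_mem hx _
  · intro b _ hb
    exact Set.indicator_of_notMem (fun hxb => (hEd b i hb).ne_of_mem hxb hx rfl) _
  · simp

lemma aux_core {d : ℕ} {Ω : Set (EuclideanSpace ℝ (Fin d))} (hΩb : Bornology.IsBounded Ω)
    {ι : Type*} [Fintype ι] [DecidableEq ι] (G : ι → Set (EuclideanSpace ℝ (Fin d)))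
    (c : ι → ℝ)
    (hGm : ∀ α, MeasurableSet (G α)) (hGd : ∀ α β, α ≠ β → Disjoint (G α) (G β))
    (hGu : (⋃ α, G α) = Ω) (w : EuclideanSpace ℝ (Fin d) → ℝ)
    (hw : ∀ α, ∀ x ∈ G α, w x = c α) (α₀ : ι) (s : ℝ)
    (h1 : ∑ β ∈ Finset.univ.filter (fun β => c α₀ < c β), (volume (G β)).toReal ≤ s)
    (h2 : s < (∑ β ∈ Finset.univ.filter (fun β => c α₀ < c β), (volume (G β)).toReal)
            + (volume (G α₀)).toReal) :
    decRearr Ω w s = c α₀ := by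
  classical
  have hsub : ∀ α, G α ⊆ Ω := fun α => hGu ▸ Set.subset_iUnion G α
  have hfin : ∀ α, volume (G α) ≠ ⊤ :=
    fun α => ((measure_mono (hsub α)).trans_lt hΩb.measure_lt_top).ne
  have key : ∀ p : ℝ, distFun Ω w p
      = ∑ β ∈ Finset.univ.filter (fun β => p < c β), (volume (G β)).toReal := by
    intro p
    have hset : {x | x ∈ Ω ∧ p < w x}
        = ⋃ β ∈ Finset.univ.filter (fun β => p < c β), G β := by
      ext x
      simp only [Set.mem_setOf_eq, Set.mem_iUnion, Finset.mem_filter, Finset.mem_univ,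
        true_and, exists_prop]
      constructor
      · rintro ⟨hxΩ, hpx⟩
        obtain ⟨β, hβ⟩ := Set.mem_iUnion.mp (hGu ▸ hxΩ : x ∈ ⋃ α, G α)
        exact ⟨β, by rwa [← hw β x hβ], hβ⟩
      · rintro ⟨β, hpc, hβ⟩
        exact ⟨hsub β hβ, by rwa [hw β x hβ]⟩
    rw [distFun, hset, measure_biUnion_finset ?_ (fun β _ => hGm β)]
    · rw [ENNReal.toReal_sum (fun β _ => hfin β)]
    · intro a _ b _ hab
      exact hGd a b hab
  have hEq : {p : ℝ | distFun Ω w p ≤ s} = Set.Ici (c α₀) := by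
    ext p
    simp only [Set.mem_setOf_eq, Set.mem_Ici]
    constructor
    · intro h
      by_contra hlt
      push_neg at hlt
      have hsup : insert α₀ (Finset.univ.filter (fun β => c α₀ < c β))
          ⊆ Finset.univ.filter (fun β => p < c β) := by
        intro β hβ
        simp only [Finset.mem_insert, Finset.mem_filter, Finset.mem_univ, true_and] at hβ ⊢
        rcases hβ with h | h
        · exact h ▸ hlt
        · exact hlt.trans h
      have := Finset.sum_le_sum_of_subset_of_nonneg hsup
        (fun β _ _ => ENNReal.toReal_nonneg (a := volume (G β)))
      rw [Finset.sum_insert (by simp)] at this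
      rw [key] at h
      linarith
    · intro h
      rw [key]
      refine le_trans (Finset.sum_le_sum_of_subset_of_nonneg ?_
        (fun β _ _ => ENNReal.toReal_nonneg (a := volume (G β)))) h1
      intro β hβ
      simp only [Finset.mem_filter, Finset.mem_univ, true_and] at hβ ⊢
      exact lt_of_le_of_lt h hβ
  rw [decRearr, hEq, csInf_Ici]

open Filter

/-- For step functions `u = Σ q_i χ_{E_i}` and `v = Σ r_j χ_{F_j}`, for all small `t > 0`
the level sets of `u + t v` are exactly `E_i ∩ F_j`, each level set of `u + tv` lies in a
single level set of `u`, and the relative rearrangement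
`v_{*u}(s) = lim_{t→0⁺} ((u+tv)_*(s) − u_*(s))/t` equals `r_j` on the interval
`J_j^i = [a_{i-1} + Σ_{k<j}|E_i∩F_k|, a_{i-1} + Σ_{k≤j}|E_i∩F_k|)`. -/
theorem stmt_9 {d : ℕ} (Ω : Set (EuclideanSpace ℝ (Fin d)))
    (hΩo : IsOpen Ω) (hΩb : Bornology.IsBounded Ω)
    (n m : ℕ) (q : Fin n → ℝ) (hq : StrictAnti q) (r : Fin m → ℝ) (hr : StrictAnti r)
    (E : Fin n → Set (EuclideanSpace ℝ (Fin d)))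
    (hEm : ∀ i, MeasurableSet (E i))
    (hEd : ∀ i j, i ≠ j → Disjoint (E i) (E j))
    (hEu : (⋃ i, E i) = Ω)
    (F : Fin m → Set (EuclideanSpace ℝ (Fin d)))
    (hFm : ∀ j, MeasurableSet (F j))
    (hFd : ∀ i j, i ≠ j → Disjoint (F i) (F j))
    (hFu : (⋃ j, F j) = Ω)
    (u v : EuclideanSpace ℝ (Fin d) → ℝ)
    (hu : ∀ x, u x = ∑ i, Set.indicator (E i) (fun _ => q i) x)
    (hv : ∀ x, v x = ∑ j, Set.indicator (F j) (fun _ => r j) x) :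
    (∃ t0 > (0 : ℝ), ∀ t, 0 < t → t < t0 →
      (∀ (i : Fin n) (j : Fin m),
        {x | x ∈ Ω ∧ u x + t * v x = q i + t * r j} = E i ∩ F j) ∧
      (∀ x ∈ Ω, ∀ y ∈ Ω, u x + t * v x = u y + t * v y → u x = u y))
    ∧ (∀ (i : Fin n) (j : Fin m) (s : ℝ),
        (∑ k ∈ Finset.univ.filter (fun k => k < i), (volume (E k)).toReal)
            + (∑ k ∈ Finset.univ.filter (fun k => k < j), (volume (E i ∩ F k)).toReal) ≤ s →
        s < (∑ k ∈ Finset.univ.filter (fun k => k < i), (volume (E k)).toReal)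
            + (∑ k ∈ Finset.univ.filter (fun k => k ≤ j), (volume (E i ∩ F k)).toReal) →
        Tendsto (fun t : ℝ =>
            (decRearr Ω (fun x => u x + t * v x) s - decRearr Ω u s) / t)
          (nhdsWithin 0 (Ioi 0)) (nhds (r j))) := by
  classical
  -- basic values of u and v
  have huE : ∀ i, ∀ x ∈ E i, u x = q i := fun i x hx => (hu x).trans (aux_sum_ind E q hEd hx)
  have hvF : ∀ j, ∀ x ∈ F j, v x = r j := fun j x hx => (hv x).trans (aux_sum_ind F r hFd hx)
  have hmemE : ∀ x ∈ Ω, ∃ i, x ∈ E i := fun x hx => Set.mem_iUnion.mp (hEu ▸ hx)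
  have hmemF : ∀ x ∈ Ω, ∃ j, x ∈ F j := fun x hx => Set.mem_iUnion.mp (hFu ▸ hx)
  -- the threshold t0
  set S : Finset (Fin n × Fin n) := Finset.univ.filter (fun p => p.1 ≠ p.2) with hS
  set δ : ℝ := if h : S.Nonempty then S.inf' h (fun p => |q p.1 - q p.2|) else 1 with hδ
  have hδpos : 0 < δ := by
    rw [hδ]
    split
    · rename_i h
      rw [Finset.lt_inf'_iff]
      intro p hp
      simp only [hS, Finset.mem_filter] at hp
      exact abs_pos.mpr (sub_ne_zero.mpr (fun he => hp.2 (hq.injective he)))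
    · norm_num
  have hδle : ∀ i i' : Fin n, i ≠ i' → δ ≤ |q i - q i'| := by
    intro i i' hne
    have hmem : (i, i') ∈ S := by simp [hS, hne]
    rw [hδ, dif_pos ⟨_, hmem⟩]
    exact Finset.inf'_le _ hmem
  set R : ℝ := ∑ j, |r j| with hR
  have hR0 : 0 ≤ R := Finset.sum_nonneg (fun j _ => abs_nonneg _)
  have hRle : ∀ j, |r j| ≤ R := fun j =>
    Finset.single_le_sum (fun k _ => abs_nonneg (r k)) (Finset.mem_univ j)
  set t0 : ℝ := δ / (2 * R + 1) with ht0
  have ht0pos : 0 < t0 := div_pos hδpos (by linarith)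
  -- key smallness estimate
  have hsmall : ∀ t, 0 < t → t < t0 → ∀ j j' : Fin m, |t * (r j - r j')| < δ := by
    intro t ht htt j j'
    have h1 : |t * (r j - r j')| ≤ t * (2 * R) := by
      rw [abs_mul, abs_of_pos ht]
      have := abs_sub (r j) (r j')
      have h2 := hRle j; have h3 := hRle j'
      have : |r j - r j'| ≤ 2 * R := by
        calc |r j - r j'| ≤ |r j| + |r j'| := abs_sub _ _
        _ ≤ 2 * R := by linarith
      nlinarith
    have h4 : t * (2 * R) < δ := by
      have : t * (2 * R + 1) < t0 * (2 * R + 1) := by nlinarith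
      rw [ht0, div_mul_cancel₀ _ (by linarith : (2:ℝ) * R + 1 ≠ 0)] at this
      nlinarith
    linarith
  -- injectivity-type statement
  have hinj : ∀ t, 0 < t → t < t0 → ∀ (i i' : Fin n) (j j' : Fin m),
      q i + t * r j = q i' + t * r j' → i = i' ∧ j = j' := by
    intro t ht htt i i' j j' he
    have hii : i = i' := by
      by_contra hne
      have h1 := hδle i i' hne
      have h2 : q i - q i' = t * (r j' - r j) := by linarith
      have := hsmall t ht htt j' j
      rw [← h2] at this
      linarith
    refine ⟨hii, hr.injective ?_⟩
    subst hii
    have : t * r j = t * r j' := by linarith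
    exact mul_left_cancel₀ ht.ne' this
  -- lexicographic ordering of values
  have hlt : ∀ t, 0 < t → t < t0 → ∀ (i i' : Fin n) (j j' : Fin m), i' < i →
      q i + t * r j < q i' + t * r j' := by
    intro t ht htt i i' j j' hii
    have h1 := hδle i' i (ne_of_lt hii)
    have h2 : q i < q i' := hq hii
    have h3 : δ ≤ q i' - q i := by rwa [abs_of_pos (by linarith)] at h1
    have h4 := hsmall t ht htt j j'
    have h5 := le_abs_self (t * (r j - r j'))
    have h6 : t * (r j - r j') = t * r j - t * r j' := by ring
    linarith
  -- finiteness and decomposition of measures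
  have hEsub : ∀ i, E i ⊆ Ω := fun i => hEu ▸ Set.subset_iUnion E i
  have hEFfin : ∀ (i : Fin n) (j : Fin m), volume (E i ∩ F j) ≠ ⊤ := fun i j =>
    ((measure_mono ((Set.inter_subset_left).trans (hEsub i))).trans_lt
      hΩb.measure_lt_top).ne
  have hsplit : ∀ i : Fin n, (volume (E i)).toReal = ∑ j, (volume (E i ∩ F j)).toReal := by
    intro i
    have hE : E i = ⋃ j ∈ (Finset.univ : Finset (Fin m)), E i ∩ F j := by
      ext x
      simp only [Set.mem_iUnion, Set.mem_inter_iff, Finset.mem_univ, exists_true_left,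
        exists_prop, true_and]
      constructor
      · intro hx
        obtain ⟨j, hj⟩ := hmemF x (hEsub i hx)
        exact ⟨j, hx, hj⟩
      · rintro ⟨j, hx, _⟩; exact hx
    calc (volume (E i)).toReal
        = (volume (⋃ j ∈ (Finset.univ : Finset (Fin m)), E i ∩ F j)).toReal := by rw [← hE]
      _ = ∑ j, (volume (E i ∩ F j)).toReal := by
          rw [measure_biUnion_finset ?_ (fun j _ => (hEm i).inter (hFm j)),
            ENNReal.toReal_sum (fun j _ => hEFfin i j)]
          intro a _ b _ hab
          exact ((hFd a b hab).mono Set.inter_subset_right Set.inter_subset_right)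
  -- the product family
  set G : Fin n × Fin m → Set (EuclideanSpace ℝ (Fin d)) := fun p => E p.1 ∩ F p.2 with hG
  have hGm : ∀ p, MeasurableSet (G p) := fun p => (hEm p.1).inter (hFm p.2)
  have hGd : ∀ p p' : Fin n × Fin m, p ≠ p' → Disjoint (G p) (G p') := by
    intro p p' hne
    rcases Prod.mk.injEq p.1 p.2 p'.1 p'.2 ▸ (fun h => hne (Prod.ext_iff.mpr h)) with _
    by_cases h1 : p.1 = p'.1
    · have h2 : p.2 ≠ p'.2 := fun h2 => hne (Prod.ext_iff.mpr ⟨h1, h2⟩)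
      exact (hFd p.2 p'.2 h2).mono Set.inter_subset_right Set.inter_subset_right
    · exact (hEd p.1 p'.1 h1).mono Set.inter_subset_left Set.inter_subset_left
  have hGu : (⋃ p, G p) = Ω := by
    apply Set.Subset.antisymm
    · exact Set.iUnion_subset (fun p => (Set.inter_subset_left).trans (hEsub p.1))
    · intro x hx
      obtain ⟨i, hi⟩ := hmemE x hx
      obtain ⟨j, hj⟩ := hmemF x hx
      exact Set.mem_iUnion.mpr ⟨(i, j), hi, hj⟩
  have hwG : ∀ t : ℝ, ∀ p : Fin n × Fin m, ∀ x ∈ G p,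
      u x + t * v x = q p.1 + t * r p.2 := by
    intro t p x hx
    rw [huE p.1 x hx.1, hvF p.2 x hx.2]
  constructor
  · -- first conjunct
    refine ⟨t0, ht0pos, fun t ht htt => ⟨?_, ?_⟩⟩
    · intro i j
      ext x
      simp only [Set.mem_setOf_eq, Set.mem_inter_iff]
      constructor
      · rintro ⟨hxΩ, he⟩
        obtain ⟨i₀, hi₀⟩ := hmemE x hxΩ
        obtain ⟨j₀, hj₀⟩ := hmemF x hxΩ
        rw [huE i₀ x hi₀, hvF j₀ x hj₀] at he
        obtain ⟨h1, h2⟩ := hinj t ht htt i₀ i j₀ j he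
        exact ⟨h1 ▸ hi₀, h2 ▸ hj₀⟩
      · rintro ⟨hxE, hxF⟩
        exact ⟨hEsub i hxE, by rw [huE i x hxE, hvF j x hxF]⟩
    · intro x hx y hy he
      obtain ⟨ix, hix⟩ := hmemE x hx
      obtain ⟨jx, hjx⟩ := hmemF x hx
      obtain ⟨iy, hiy⟩ := hmemE y hy
      obtain ⟨jy, hjy⟩ := hmemF y hy
      rw [huE ix x hix, hvF jx x hjx, huE iy y hiy, hvF jy y hjy] at he
      obtain ⟨h1, _⟩ := hinj t ht htt ix iy jx jy he
      rw [huE ix x hix, huE iy y hiy, h1]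
  · -- second conjunct
    intro i j s hs1 hs2
    -- abbreviations
    set A : ℝ := ∑ k ∈ Finset.univ.filter (fun k => k < i), (volume (E k)).toReal with hA
    set B : ℝ := ∑ k ∈ Finset.univ.filter (fun k => k < j), (volume (E i ∩ F k)).toReal with hB
    -- rearrangement of u
    have hPle : (∑ k ∈ Finset.univ.filter (fun k => k ≤ j), (volume (E i ∩ F k)).toReal)
        ≤ (volume (E i)).toReal := by
      rw [hsplit i]
      exact Finset.sum_le_sum_of_subset_of_nonneg (Finset.subset_univ _)
        (fun k _ _ => ENNReal.toReal_nonneg)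
    have hru : decRearr Ω u s = q i := by
      apply aux_core hΩb E q hEm hEd hEu u huE i s
      · rw [show Finset.univ.filter (fun β => q i < q β)
            = Finset.univ.filter (fun β => β < i) by
          apply Finset.filter_congr; intro k _; simp [hq.lt_iff_gt]]
        have hB0 : 0 ≤ B := Finset.sum_nonneg (fun k _ => ENNReal.toReal_nonneg)
        linarith
      · rw [show Finset.univ.filter (fun β => q i < q β)
            = Finset.univ.filter (fun β => β < i) by
          apply Finset.filter_congr; intro k _; simp [hq.lt_iff_gt]]
        linarith
    -- the sum over the lexicographically-earlier product indices
    have hsumlex : ∀ t, 0 < t → t < t0 →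
        (∑ p ∈ Finset.univ.filter
            (fun p : Fin n × Fin m => q i + t * r j < q p.1 + t * r p.2),
          (volume (G p)).toReal) = A + B := by
      intro t ht htt
      have hfiltereq : Finset.univ.filter
            (fun p : Fin n × Fin m => q i + t * r j < q p.1 + t * r p.2)
          = Finset.univ.filter (fun p : Fin n × Fin m => p.1 < i ∨ (p.1 = i ∧ p.2 < j)) := by
        apply Finset.filter_congr
        intro p _
        constructor
        · intro h
          rcases lt_trichotomy p.1 i with h1 | h1 | h1
          · exact Or.inl h1
          · refine Or.inr ⟨h1, ?_⟩
            rw [h1] at h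
            have : r j < r p.2 := by
              have := lt_of_mul_lt_mul_left (by linarith : t * r j < t * r p.2) ht.le
              exact this
            exact hr.lt_iff_gt.mp this
          · exact absurd (hlt t ht htt p.1 i p.2 j h1) (by linarith)
        · rintro (h1 | ⟨h1, h2⟩)
          · exact hlt t ht htt i p.1 j p.2 h1
          · rw [h1]
            have : r j < r p.2 := hr h2
            nlinarith
      rw [hfiltereq]
      have hdisj : Disjoint
          (Finset.univ.filter (fun p : Fin n × Fin m => p.1 < i))
          (Finset.univ.filter (fun p : Fin n × Fin m => p.1 = i ∧ p.2 < j)) := by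
        rw [Finset.disjoint_filter]
        rintro p _ h1 ⟨h2, _⟩
        exact absurd h2 (ne_of_lt h1)
      have hunion : Finset.univ.filter
            (fun p : Fin n × Fin m => p.1 < i ∨ (p.1 = i ∧ p.2 < j))
          = (Finset.univ.filter (fun p : Fin n × Fin m => p.1 < i))
            ∪ (Finset.univ.filter (fun p : Fin n × Fin m => p.1 = i ∧ p.2 < j)) := by
        rw [Finset.filter_or]
      rw [hunion, Finset.sum_union hdisj]
      congr 1
      · -- first part equals A
        rw [hA]
        rw [Finset.sum_filter, Finset.sum_filter, Fintype.sum_prod_type]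
        apply Finset.sum_congr rfl
        intro a _
        by_cases ha : a < i
        · simp only [ha, if_true]
          rw [hsplit a]
        · simp [ha]
      · -- second part equals B
        rw [hB]
        rw [Finset.sum_filter, Finset.sum_filter, Fintype.sum_prod_type]
        rw [Finset.sum_eq_single i]
        · apply Finset.sum_congr rfl
          intro b _
          by_cases hb : b < j <;> simp [hb, hG]
        · intro a _ ha
          apply Finset.sum_eq_zero
          intro b _
          simp [ha]
        · simp
    -- rearrangement of u + t v
    have hrw : ∀ t, 0 < t → t < t0 →
        decRearr Ω (fun x => u x + t * v x) s = q i + t * r j := by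
      intro t ht htt
      apply aux_core hΩb G (fun p => q p.1 + t * r p.2) hGm hGd hGu _
        (hwG t) (i, j) s
      · rw [hsumlex t ht htt]
        exact hs1
      · rw [hsumlex t ht htt]
        have : (volume (G (i, j))).toReal = (volume (E i ∩ F j)).toReal := rfl
        rw [this]
        have hBsum : B + (volume (E i ∩ F j)).toReal
            = ∑ k ∈ Finset.univ.filter (fun k => k ≤ j), (volume (E i ∩ F k)).toReal := by
          rw [hB, show Finset.univ.filter (fun k => k ≤ j)
              = insert j (Finset.univ.filter (fun k => k < j)) by
            ext k
            simp only [Finset.mem_filter, Finset.mem_univ, true_and, Finset.mem_insert]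
            rw [le_iff_lt_or_eq]; tauto]
          rw [Finset.sum_insert (by simp)]
          ring
        linarith
    -- conclude
    have hmem : Set.Ioo (0:ℝ) t0 ∈ nhdsWithin 0 (Set.Ioi 0) :=
      Ioo_mem_nhdsGT_of_mem ⟨le_refl 0, ht0pos⟩
    apply Tendsto.congr' (f₁ := fun _ => r j)
    · filter_upwards [hmem] with t ht
      rw [hrw t ht.1 ht.2, hru]
      rw [add_sub_cancel_left, mul_comm, mul_div_assoc, div_self ht.1.ne', mul_one]
    · exact tendsto_const_nhds
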